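/- arXiv:2201.00528 — 3 statements merged into one kernel-verified Lean document; each statement's English description precedes it below -/
import Mathlib

section
/- The alternative limit definition of the Schwarzian cocycle holds: for φ holomorphic with φ'(w) ≠ 0, 6·lim_{z→w} ∂²/∂z∂w [log((φ(z)-φ(w))/(z-w))] = {φ(w),w}_2, i.e. the mixed second derivative of log of the difference quotient tends to one sixth of the Schwarzian derivative. -/
open Complex Filter Topology

/-- Alternative limit definition of the Schwarzian cocycle:
if L(z,w) is a holomorphic branch of log((φ(z)-φ(w))/(z-w)) near the diagonal,
with Lw = ∂L/∂w and M = ∂²L/∂z∂w, then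
6·lim_{z→w₀} M(z,w₀) = {φ,w₀}₂ = φ'''/φ' - (3/2)(φ''/φ')² at w₀. -/
theorem schwarzian_as_limit_of_mixed_derivative
    (U : Set ℂ) (hU : IsOpen U) (w₀ : ℂ) (hw₀ : w₀ ∈ U)
    (φ φ' φ'' φ''' : ℂ → ℂ) (L Lw M : ℂ → ℂ → ℂ)
    (hφ : ∀ z ∈ U, HasDerivAt φ (φ' z) z)
    (hφ' : ∀ z ∈ U, HasDerivAt φ' (φ'' z) z)
    (hφ'' : ∀ z ∈ U, HasDerivAt φ'' (φ''' z) z)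
    (hne : ∀ z ∈ U, φ' z ≠ 0)
    (hL : ∀ z ∈ U, ∀ w ∈ U, z ≠ w →
      Complex.exp (L z w) = (φ z - φ w) / (z - w))
    (hLw : ∀ z ∈ U, ∀ w ∈ U, z ≠ w →
      HasDerivAt (fun w' => L z w') (Lw z w) w)
    (hM : ∀ z ∈ U, ∀ w ∈ U, z ≠ w →
      HasDerivAt (fun z' => Lw z' w) (M z w) z) :
    Tendsto (fun z => 6 * M z w₀) (𝓝[≠] w₀)
      (𝓝 (φ''' w₀ / φ' w₀ - (3/2) * (φ'' w₀ / φ' w₀) ^ 2)) := by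
  have hUnhds : U ∈ 𝓝 w₀ := hU.mem_nhds hw₀
  -- φ z ≠ φ w₀ on U \ {w₀}
  have hphine : ∀ z ∈ U, z ≠ w₀ → φ z - φ w₀ ≠ 0 := by
    intro z hz hzw hcon
    have := hL z hz w₀ hw₀ hzw
    rw [hcon, zero_div] at this
    exact Complex.exp_ne_zero _ this
  -- Step 1: explicit formula for Lw z w₀
  have step1 : ∀ z ∈ U, z ≠ w₀ →
      Lw z w₀ = -φ' w₀ / (φ z - φ w₀) + 1 / (z - w₀) := by
    intro z hz hzw
    have hA : φ z - φ w₀ ≠ 0 := hphine z hz hzw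
    have ht : z - w₀ ≠ 0 := sub_ne_zero.2 hzw
    have d1 : HasDerivAt (fun w' => Complex.exp (L z w'))
        (Complex.exp (L z w₀) * Lw z w₀) w₀ := (hLw z hz w₀ hw₀ hzw).cexp
    have hmem : (U ∩ {z}ᶜ) ∈ 𝓝 w₀ :=
      (hU.inter isOpen_compl_singleton).mem_nhds ⟨hw₀, fun h => hzw h.symm⟩
    have heq : (fun w' => (φ z - φ w') / (z - w')) =ᶠ[𝓝 w₀]
        (fun w' => Complex.exp (L z w')) := by
      filter_upwards [hmem] with w' hw'
      exact (hL z hz w' hw'.1 (fun h => hw'.2 h.symm)).symm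
    have d2 : HasDerivAt (fun w' => (φ z - φ w') / (z - w'))
        (Complex.exp (L z w₀) * Lw z w₀) w₀ := d1.congr_of_eventuallyEq heq
    have h1 : HasDerivAt (fun w' => φ z - φ w') (-φ' w₀) w₀ := (hφ w₀ hw₀).const_sub (φ z)
    have h2 : HasDerivAt (fun w' => z - w') (-1 : ℂ) w₀ := (hasDerivAt_id w₀).const_sub z
    have d3 := h1.div h2 ht
    have huniq := d2.unique d3
    rw [hL z hz w₀ hw₀ hzw] at huniq
    have huniq2 : (φ z - φ w₀) * Lw z w₀ * (z - w₀) = -(φ' w₀ * (z - w₀)) - (φ w₀ - φ z) := by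
      apply mul_right_cancel₀ ht
      field_simp at huniq
      linear_combination (z - w₀) * huniq
    field_simp
    linear_combination huniq2
  -- Step 2: explicit formula for M z w₀
  have step2 : ∀ z ∈ U, z ≠ w₀ →
      M z w₀ = φ' w₀ * φ' z / (φ z - φ w₀)^2 - 1 / (z - w₀)^2 := by
    intro z hz hzw
    have hA : φ z - φ w₀ ≠ 0 := hphine z hz hzw
    have ht : z - w₀ ≠ 0 := sub_ne_zero.2 hzw
    have hmem : (U ∩ {w₀}ᶜ) ∈ 𝓝 z :=
      (hU.inter isOpen_compl_singleton).mem_nhds ⟨hz, hzw⟩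
    have heq : (fun z' => -φ' w₀ / (φ z' - φ w₀) + 1 / (z' - w₀)) =ᶠ[𝓝 z]
        (fun z' => Lw z' w₀) := by
      filter_upwards [hmem] with z' hz'
      exact (step1 z' hz'.1 hz'.2).symm
    have d2 := (hM z hz w₀ hw₀ hzw).congr_of_eventuallyEq heq
    have h1 : HasDerivAt (fun z' => -φ' w₀ / (φ z' - φ w₀))
        ((0 * (φ z - φ w₀) - (-φ' w₀) * (φ' z)) / (φ z - φ w₀)^2) z :=
      (hasDerivAt_const z (-φ' w₀)).div ((hφ z hz).sub_const (φ w₀)) hA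
    have h2 : HasDerivAt (fun z' => 1 / (z' - w₀))
        ((0 * (z - w₀) - 1 * 1) / (z - w₀)^2) z :=
      (hasDerivAt_const z (1:ℂ)).div ((hasDerivAt_id z).sub_const w₀) ht
    have huniq := d2.unique (h1.add h2)
    rw [huniq]
    field_simp
    ring
  -- Analytic structure: iterated difference quotients of φ at w₀
  have hφdiff : DifferentiableOn ℂ φ U := fun z hz =>
    ((hφ z hz).differentiableAt).differentiableWithinAt
  have hφan : AnalyticAt ℂ φ w₀ := hφdiff.analyticAt hUnhds
  obtain ⟨P, hP⟩ := hφan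
  set h : ℂ → ℂ := dslope φ w₀ with hh_def
  set p : ℂ → ℂ := dslope h w₀ with hp_def
  set q : ℂ → ℂ := dslope p w₀ with hq_def
  have hP1 : HasFPowerSeriesAt h P.fslope w₀ := hP.has_fpower_series_dslope_fslope
  have hP2 : HasFPowerSeriesAt p P.fslope.fslope w₀ := hP1.has_fpower_series_dslope_fslope
  have hP3 : HasFPowerSeriesAt q P.fslope.fslope.fslope w₀ := hP2.has_fpower_series_dslope_fslope
  have hhan : AnalyticAt ℂ h w₀ := ⟨_, hP1⟩
  have hqan : AnalyticAt ℂ q w₀ := ⟨_, hP3⟩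
  obtain ⟨V, hVsub, hVopen, hVw⟩ := mem_nhds_iff.mp hqan.eventually_analyticAt
  have hqV : AnalyticOnNhd ℂ q V := fun y hy => hVsub hy
  have hq'V : AnalyticOnNhd ℂ (deriv q) V := hqV.deriv_of_isOpen hVopen
  have hq''V : AnalyticOnNhd ℂ (deriv (deriv q)) V := hq'V.deriv_of_isOpen hVopen
  -- basic identities
  have id1 : ∀ z, φ z = φ w₀ + (z - w₀) * h z := fun z => by
    have := sub_smul_dslope φ w₀ z; rw [smul_eq_mul] at this; linear_combination -this
  have id2 : ∀ z, h z = h w₀ + (z - w₀) * p z := fun z => by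
    have := sub_smul_dslope h w₀ z; rw [smul_eq_mul] at this; linear_combination -this
  have id3 : ∀ z, p z = p w₀ + (z - w₀) * q z := fun z => by
    have := sub_smul_dslope p w₀ z; rw [smul_eq_mul] at this; linear_combination -this
  have hc₁ : h w₀ = φ' w₀ := by
    rw [hh_def, dslope_same]; exact (hφ w₀ hw₀).deriv
  set W : Set ℂ := U ∩ V with hW_def
  have hWopen : IsOpen W := hU.inter hVopen
  have hWw : w₀ ∈ W := ⟨hw₀, hVw⟩
  have idφ : ∀ z, φ z = φ w₀ + h w₀*(z-w₀) + p w₀*(z-w₀)^2 + (z-w₀)^3 * q z := fun z => by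
    linear_combination id1 z + (z-w₀)*id2 z + (z-w₀)^2 * id3 z
  -- first derivative identity on W
  have eq1 : ∀ z ∈ W, φ' z
      = h w₀ + 2*p w₀*(z-w₀) + 3*(z-w₀)^2*q z + (z-w₀)^3 * deriv q z := by
    intro z hz
    have hq : HasDerivAt q (deriv q z) z := (hqV z hz.2).differentiableAt.hasDerivAt
    have hF : HasDerivAt (fun z' => φ w₀ + h w₀*(z'-w₀) + p w₀*(z'-w₀)^2 + (z'-w₀)^3 * q z')
        (0 + h w₀ * 1 + p w₀ * (↑2*(z-w₀)^1*1) + ((↑3*(z-w₀)^2*1) * q z + (z-w₀)^3 * deriv q z)) z := by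
      exact (((hasDerivAt_const z (φ w₀)).add
        (((hasDerivAt_id z).sub_const w₀).const_mul (h w₀))).add
        ((((hasDerivAt_id z).sub_const w₀).pow 2).const_mul (p w₀))).add
        ((((hasDerivAt_id z).sub_const w₀).pow 3).mul hq)
    have hφz : HasDerivAt φ
        (0 + h w₀ * 1 + p w₀ * (↑2*(z-w₀)^1*1) + ((↑3*(z-w₀)^2*1) * q z + (z-w₀)^3 * deriv q z)) z :=
      hF.congr_of_eventuallyEq (Filter.Eventually.of_forall idφ)
    have := (hφ z hz.1).unique hφz
    rw [this]; ring
  -- second derivative identity on W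
  have eq2 : ∀ z ∈ W, φ'' z
      = 2*p w₀ + 6*(z-w₀)*q z + 6*(z-w₀)^2*deriv q z + (z-w₀)^3 * deriv (deriv q) z := by
    intro z hz
    have hq : HasDerivAt q (deriv q z) z := (hqV z hz.2).differentiableAt.hasDerivAt
    have hq' : HasDerivAt (deriv q) (deriv (deriv q) z) z := (hq'V z hz.2).differentiableAt.hasDerivAt
    have hF : HasDerivAt (fun z' => h w₀ + 2*p w₀*(z'-w₀) + 3*(z'-w₀)^2*q z' + (z'-w₀)^3 * deriv q z')
        (0 + 2*p w₀ * 1 + ((3*(↑2*(z-w₀)^1*1)) * q z + 3*(z-w₀)^2 * deriv q z)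
          + ((↑3*(z-w₀)^2*1) * deriv q z + (z-w₀)^3 * deriv (deriv q) z)) z := by
      exact (((hasDerivAt_const z (h w₀)).add
        (((hasDerivAt_id z).sub_const w₀).const_mul (2*p w₀))).add
        (((((hasDerivAt_id z).sub_const w₀).pow 2).const_mul 3).mul hq)).add
        ((((hasDerivAt_id z).sub_const w₀).pow 3).mul hq')
    have hev : φ' =ᶠ[𝓝 z] (fun z' => h w₀ + 2*p w₀*(z'-w₀) + 3*(z'-w₀)^2*q z' + (z'-w₀)^3 * deriv q z') := by
      filter_upwards [hWopen.mem_nhds hz] with z' hz'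
      exact eq1 z' hz'
    have hφz := hF.congr_of_eventuallyEq hev
    have := (hφ' z hz.1).unique hφz
    rw [this]; ring
  have hc2 : φ'' w₀ = 2 * p w₀ := by
    have := eq2 w₀ hWw; simpa using this
  -- third derivative at w₀
  have hc3 : φ''' w₀ = 6 * q w₀ := by
    have hq : HasDerivAt q (deriv q w₀) w₀ := (hqV w₀ hVw).differentiableAt.hasDerivAt
    have hq' : HasDerivAt (deriv q) (deriv (deriv q) w₀) w₀ := (hq'V w₀ hVw).differentiableAt.hasDerivAt
    have hq'' : HasDerivAt (deriv (deriv q)) (deriv (deriv (deriv q)) w₀) w₀ :=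
      (hq''V w₀ hVw).differentiableAt.hasDerivAt
    have hF : HasDerivAt (fun z' => 2*p w₀ + 6*(z'-w₀)*q z' + 6*(z'-w₀)^2*deriv q z' + (z'-w₀)^3 * deriv (deriv q) z')
        (0 + ((6*1) * q w₀ + 6*(w₀-w₀) * deriv q w₀)
          + ((6*(↑2*(w₀-w₀)^1*1)) * deriv q w₀ + 6*(w₀-w₀)^2 * deriv (deriv q) w₀)
          + ((↑3*(w₀-w₀)^2*1) * deriv (deriv q) w₀ + (w₀-w₀)^3 * deriv (deriv (deriv q)) w₀)) w₀ := by
      exact (((hasDerivAt_const w₀ (2*p w₀)).add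
        ((((hasDerivAt_id w₀).sub_const w₀).const_mul 6).mul hq)).add
        (((((hasDerivAt_id w₀).sub_const w₀).pow 2).const_mul 6).mul hq')).add
        ((((hasDerivAt_id w₀).sub_const w₀).pow 3).mul hq'')
    have hev : φ'' =ᶠ[𝓝 w₀] (fun z' => 2*p w₀ + 6*(z'-w₀)*q z' + 6*(z'-w₀)^2*deriv q z' + (z'-w₀)^3 * deriv (deriv q) z') := by
      filter_upwards [hWopen.mem_nhds hWw] with z' hz'
      exact eq2 z' hz'
    have hφz := hF.congr_of_eventuallyEq hev
    have := (hφ'' w₀ hw₀).unique hφz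
    rw [this]; ring
  -- the limit function
  have hc₁ne : h w₀ ≠ 0 := by rw [hc₁]; exact hne w₀ hw₀
  set G : ℂ → ℂ := fun z => (h w₀ * q z - (p w₀)^2)
      + (z - w₀)*(h w₀ * deriv q z - 2*p w₀*q z) - (z - w₀)^2*(q z)^2 with hG_def
  have hqct : ContinuousAt q w₀ := hqan.continuousAt
  have hq'ct : ContinuousAt (deriv q) w₀ := (hq'V w₀ hVw).continuousAt
  have hhct : ContinuousAt h w₀ := hhan.continuousAt
  have hGct : ContinuousAt G w₀ := by
    apply ContinuousAt.sub
    apply ContinuousAt.add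
    · exact (continuousAt_const.mul hqct).sub continuousAt_const
    · exact (continuousAt_id.sub continuousAt_const).mul
        ((continuousAt_const.mul hq'ct).sub (continuousAt_const.mul hqct))
    · exact ((continuousAt_id.sub continuousAt_const).pow 2).mul (hqct.pow 2)
  have ctFull : ContinuousAt (fun z => 6 * G z / h z ^ 2) w₀ :=
    (continuousAt_const.mul hGct).div (hhct.pow 2) (pow_ne_zero 2 hc₁ne)
  -- value of the limit
  have hGw : G w₀ = h w₀ * q w₀ - (p w₀)^2 := by simp [hG_def]
  have hval : 6 * G w₀ / h w₀ ^ 2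
      = φ''' w₀ / φ' w₀ - (3/2) * (φ'' w₀ / φ' w₀) ^ 2 := by
    rw [hGw, hc2, hc3, ← hc₁]
    field_simp
    ring
  have hhne : ∀ᶠ z in 𝓝 w₀, h z ≠ 0 := hhct.eventually_ne hc₁ne
  -- eventual equality on the punctured neighborhood
  have hev : (fun z => 6 * G z / h z ^ 2) =ᶠ[𝓝[≠] w₀] (fun z => 6 * M z w₀) := by
    filter_upwards [mem_nhdsWithin_of_mem_nhds (hWopen.mem_nhds hWw),
      mem_nhdsWithin_of_mem_nhds hhne, self_mem_nhdsWithin] with z hzW hzh hzne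
    have hzne' : z ≠ w₀ := hzne
    have ht : z - w₀ ≠ 0 := sub_ne_zero.2 hzne'
    have hAz : φ z - φ w₀ = (z - w₀) * h z := by linear_combination id1 z
    have idh : h z = h w₀ + p w₀*(z-w₀) + (z-w₀)^2 * q z := by
      linear_combination id2 z + (z-w₀)*id3 z
    have hexp : h w₀ + p w₀*(z-w₀) + (z-w₀)^2 * q z ≠ 0 := idh ▸ hzh
    rw [step2 z hzW.1 hzne', hAz, eq1 z hzW, ← hc₁, idh]
    field_simp
    ring
  refine Tendsto.congr' hev ?_
  rw [← hval]
  exact ctFull.tendsto.mono_left nhdsWithin_le_nhds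
end

section
/- The alternative limit definition of the affine cocycle holds: for φ holomorphic with φ'(w) ≠ 0, 2·lim_{z→w} ∂/∂z [log((φ(z)-φ(w))/(z-w))] = {φ(w),w}_1 = φ''(w)/φ'(w). -/
open Complex Filter Topology

/-- Alternative limit definition of the affine cocycle: if L is a
holomorphic branch of log((φ(z)-φ(w₀))/(z-w₀)) near w₀ (with derivative L'), then
2·lim_{z→w₀} L'(z) = {φ,w₀}₁ = φ''(w₀)/φ'(w₀). -/
theorem affine_cocycle_as_limit
    (U : Set ℂ) (hU : IsOpen U) (w₀ : ℂ) (hw₀ : w₀ ∈ U)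
    (φ φ' φ'' L L' : ℂ → ℂ)
    (hφ : ∀ z ∈ U, HasDerivAt φ (φ' z) z)
    (hφ' : ∀ z ∈ U, HasDerivAt φ' (φ'' z) z)
    (hne : φ' w₀ ≠ 0)
    (hL : ∀ z ∈ U, z ≠ w₀ →
      Complex.exp (L z) = (φ z - φ w₀) / (z - w₀))
    (hLd : ∀ z ∈ U, z ≠ w₀ → HasDerivAt L (L' z) z) :
    Tendsto (fun z => 2 * L' z) (𝓝[≠] w₀) (𝓝 (φ'' w₀ / φ' w₀)) := by
  have hUn : U ∈ 𝓝 w₀ := hU.mem_nhds hw₀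
  have hdφ : DifferentiableOn ℂ φ U := fun z hz =>
    (hφ z hz).differentiableAt.differentiableWithinAt
  obtain ⟨p, hp⟩ : AnalyticAt ℂ φ w₀ := hdφ.analyticAt hUn
  set h : ℂ → ℂ := dslope φ w₀ with hhdef
  have hAh : AnalyticAt ℂ h w₀ := ⟨p.fslope, hp.has_fpower_series_dslope_fslope⟩
  have hAh' : AnalyticAt ℂ (deriv h) w₀ := by
    have hS : IsOpen {z | AnalyticAt ℂ h z} := isOpen_analyticAt ℂ h
    exact (AnalyticOnNhd.deriv (fun z hz => hz)) w₀ hAh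
  have hhw : h w₀ = φ' w₀ := by
    rw [hhdef, dslope_same]; exact (hφ w₀ hw₀).deriv
  have hne' : h w₀ ≠ 0 := hhw ▸ hne
  -- global identity: φ y = φ w₀ + (y - w₀) * h y
  have hφeq : ∀ y, φ y = φ w₀ + (y - w₀) * h y := by
    intro y
    have := sub_smul_dslope φ w₀ y
    rw [smul_eq_mul] at this
    linear_combination -this
  -- eventually, φ' z = h z + (z - w₀) * deriv h z
  have hev : ∀ᶠ z in 𝓝 w₀, φ' z = h z + (z - w₀) * deriv h z := by
    filter_upwards [hUn, hAh.eventually_analyticAt] with z hz hA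
    have hdz : DifferentiableAt ℂ h z := hA.differentiableAt
    have h1 : HasDerivAt (fun y => φ w₀ + (y - w₀) * h y)
        (0 + ((1 - 0) * h z + (z - w₀) * deriv h z)) z := by
      exact (hasDerivAt_const z (φ w₀)).add
        ((((hasDerivAt_id z).sub (hasDerivAt_const z w₀)).mul hdz.hasDerivAt))
    have h2 : HasDerivAt φ (0 + ((1 - 0) * h z + (z - w₀) * deriv h z)) z := by
      have : φ = fun y => φ w₀ + (y - w₀) * h y := funext hφeq
      rw [this]; exact h1
    have := (hφ z hz).unique h2
    rw [this]; ring
  -- φ'' w₀ = 2 * deriv h w₀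
  have hφ''eq : φ'' w₀ = 2 * deriv h w₀ := by
    have h1 : HasDerivAt (fun z => h z + (z - w₀) * deriv h z)
        (deriv h w₀ + ((1 - 0) * deriv h w₀ + (w₀ - w₀) * deriv (deriv h) w₀)) w₀ :=
      (hAh.differentiableAt.hasDerivAt).add
        (((hasDerivAt_id w₀).sub (hasDerivAt_const w₀ w₀)).mul
          hAh'.differentiableAt.hasDerivAt)
    have h2 : HasDerivAt φ'
        (deriv h w₀ + ((1 - 0) * deriv h w₀ + (w₀ - w₀) * deriv (deriv h) w₀)) w₀ :=
      h1.congr_of_eventuallyEq hev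
    have := (hφ' w₀ hw₀).unique h2
    rw [this]; ring
  -- eventually on punctured nbhd, L' z = deriv h z / h z
  have hevL : ∀ᶠ z in 𝓝[≠] w₀, 2 * L' z = 2 * deriv h z / h z := by
    filter_upwards [nhdsWithin_le_nhds hUn, self_mem_nhdsWithin] with z hz hzne
    have hzne : z ≠ w₀ := hzne
    have hopen : IsOpen (U \ {w₀}) := hU.sdiff isClosed_singleton
    have hmem : U \ {w₀} ∈ 𝓝 z := hopen.mem_nhds ⟨hz, hzne⟩
    have heq : (fun y => Complex.exp (L y)) =ᶠ[𝓝 z] h := by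
      filter_upwards [hmem] with y hy
      rw [hL y hy.1 hy.2, hhdef, dslope_of_ne _ hy.2, slope_def_field]
    have hd1 : HasDerivAt (fun y => Complex.exp (L y))
        (Complex.exp (L z) * L' z) z := (hLd z hz hzne).cexp
    have hd2 : HasDerivAt h (Complex.exp (L z) * L' z) z :=
      hd1.congr_of_eventuallyEq heq.symm
    have hdh : deriv h z = Complex.exp (L z) * L' z := hd2.deriv
    have hLz : h z = Complex.exp (L z) := by
      rw [hhdef, dslope_of_ne _ hzne, slope_def_field, ← hL z hz hzne]
    rw [hdh, hLz]
    field_simp [Complex.exp_ne_zero]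
  have htend : Tendsto (fun z => 2 * deriv h z / h z) (𝓝 w₀)
      (𝓝 (2 * deriv h w₀ / h w₀)) :=
    (tendsto_const_nhds.mul hAh'.continuousAt).div hAh.continuousAt hne'
  have hval : φ'' w₀ / φ' w₀ = 2 * deriv h w₀ / h w₀ := by
    rw [hφ''eq, hhw]
  rw [hval]
  exact Tendsto.congr' (hevL.mono fun z hz => hz.symm) (htend.mono_left nhdsWithin_le_nhds)
end

section
/- If a double differential has local forms F(z)dz·dw = dz·dw/(z-w)² - 2c₂(w)dz·dw + O(z-w) and transforms as F̃(φ(z))·φ'(z)·φ'(w) = F(z) with F̃(z̃) = 1/(z̃-w̃)² - 2c̃₂(w̃) + O(z̃-w̃), then 2c̃₂(w̃)·(φ'(w))² = 2c₂(w) + (1/6){w̃,w}_2, i.e. c₂ transforms as a projective connection. -/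
open Complex Filter Topology Asymptotics

lemma coeff_eq_iteratedDeriv_div {f : ℂ → ℂ} {p : FormalMultilinearSeries ℂ ℂ ℂ} {w : ℂ}
    (hp : HasFPowerSeriesAt f p w) (n : ℕ) :
    p.coeff n = iteratedDeriv n f w / (n.factorial) := by
  obtain ⟨r, hpb⟩ := hp
  have h := hpb.factorial_smul (1 : ℂ) n
  rw [iteratedDeriv_eq_iteratedFDeriv, ← h, FormalMultilinearSeries.apply_eq_pow_smul_coeff]
  simp [Nat.factorial_ne_zero]

lemma analytic_taylor (f : ℂ → ℂ) (w : ℂ) (hf : AnalyticAt ℂ f w) (n : ℕ) :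
    (fun u => f (w + u) - ∑ i ∈ Finset.range n, iteratedDeriv i f w / (i.factorial) * u ^ i)
      =O[𝓝 (0 : ℂ)] fun u => u ^ n := by
  obtain ⟨p, hp⟩ := hf
  have h := hp.isBigO_sub_partialSum_pow n
  have heq : ∀ u : ℂ, p.partialSum n u
      = ∑ i ∈ Finset.range n, iteratedDeriv i f w / (i.factorial) * u ^ i := by
    intro u
    unfold FormalMultilinearSeries.partialSum
    refine Finset.sum_congr rfl fun i _ => ?_
    rw [FormalMultilinearSeries.apply_eq_pow_smul_coeff, coeff_eq_iteratedDeriv_div hp,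
      smul_eq_mul]
    ring
  simp only [heq] at h
  calc (fun u => f (w + u) - ∑ i ∈ Finset.range n, iteratedDeriv i f w / (i.factorial) * u ^ i)
      =O[𝓝 (0:ℂ)] (fun u : ℂ => ‖u‖ ^ n) := h
    _ =O[𝓝 (0:ℂ)] (fun u : ℂ => u ^ n) := by
        apply IsBigO.of_norm_right
        simp [isBigO_refl]

/-- Taylor at a point, recentred. -/
lemma analytic_taylor' (f : ℂ → ℂ) (w : ℂ) (hf : AnalyticAt ℂ f w) (n : ℕ) :
    (fun z => f z - ∑ i ∈ Finset.range n, iteratedDeriv i f w / (i.factorial) * (z - w) ^ i)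
      =O[𝓝 w] fun z => (z - w) ^ n := by
  have ht : Filter.Tendsto (fun z : ℂ => z - w) (𝓝 w) (𝓝 (0 : ℂ)) := by
    simpa using (continuous_sub_right w).tendsto w
  refine ((analytic_taylor f w hf n).comp_tendsto ht).congr (fun z => ?_) (fun z => rfl)
  simp only [Function.comp]
  rw [show w + (z - w) = z by ring]

/-- If a double differential has local forms
F(z)dzdw = dzdw/(z-w)² - 2c₂dzdw + O(z-w) and transforms as
F̃(φ(z))·φ'(z)·φ'(w) = F(z), with F̃(z̃) = 1/(z̃-w̃)² - 2·ct₂ + O(z̃-w̃) at w̃ = φ(w),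
then 2·ct₂·(φ'(w))² = 2c₂ + (1/6){w̃,w}₂, where
{w̃,w}₂ = φ'''/φ' - (3/2)(φ''/φ')² at w; i.e. c₂ transforms as a projective
connection. -/
theorem projective_connection_transformation
    (U : Set ℂ) (hU : IsOpen U) (w : ℂ) (hw : w ∈ U)
    (c₂ ct₂ : ℂ) (F Ft φ φ' φ'' φ''' : ℂ → ℂ)
    (hφ : ∀ z ∈ U, HasDerivAt φ (φ' z) z)
    (hφ' : ∀ z ∈ U, HasDerivAt φ' (φ'' z) z)
    (hφ'' : ∀ z ∈ U, HasDerivAt φ'' (φ''' z) z)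
    (hne : ∀ z ∈ U, φ' z ≠ 0)
    (hexp : (fun z => F z - ((z - w) ^ 2)⁻¹ + 2 * c₂) =O[𝓝[≠] w] fun z => z - w)
    (htrans : ∀ z ∈ U, z ≠ w → Ft (φ z) * φ' z * φ' w = F z)
    (hexp' : (fun ζ => Ft ζ - ((ζ - φ w) ^ 2)⁻¹ + 2 * ct₂)
      =O[𝓝[≠] (φ w)] fun ζ => ζ - φ w) :
    2 * ct₂ * (φ' w) ^ 2
      = 2 * c₂ + (1/6) * (φ''' w / φ' w - (3/2) * (φ'' w / φ' w) ^ 2) := by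
  have ha : φ' w ≠ 0 := hne w hw
  set a := φ' w with ha_def
  set b : ℂ := φ'' w / 2 with hb_def
  set c : ℂ := φ''' w / 6 with hc_def
  have hUn : U ∈ 𝓝 w := hU.mem_nhds hw
  -- analyticity
  have hdiff1 : DifferentiableOn ℂ φ U := fun z hz =>
    ((hφ z hz).differentiableAt).differentiableWithinAt
  have hdiff2 : DifferentiableOn ℂ φ' U := fun z hz =>
    ((hφ' z hz).differentiableAt).differentiableWithinAt
  have hAφ : AnalyticAt ℂ φ w := hdiff1.analyticAt hUn
  have hAφ' : AnalyticAt ℂ φ' w := hdiff2.analyticAt hUn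
  -- iterated derivatives
  have hdφ : ∀ z ∈ U, deriv φ z = φ' z := fun z hz => (hφ z hz).deriv
  have hd2 : ∀ z ∈ U, iteratedDeriv 2 φ z = φ'' z := by
    intro z hz
    rw [show (2:ℕ) = 1 + 1 from rfl, iteratedDeriv_succ, iteratedDeriv_one]
    have h : deriv φ =ᶠ[𝓝 z] φ' := by
      filter_upwards [hU.mem_nhds hz] with y hy using hdφ y hy
    rw [h.deriv_eq]
    exact (hφ' z hz).deriv
  have hd3 : iteratedDeriv 3 φ w = φ''' w := by
    rw [show (3:ℕ) = 2 + 1 from rfl, iteratedDeriv_succ]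
    have h : iteratedDeriv 2 φ =ᶠ[𝓝 w] φ'' := by
      filter_upwards [hUn] with y hy using hd2 y hy
    rw [h.deriv_eq]
    exact (hφ'' w hw).deriv
  have hd2' : iteratedDeriv 2 φ' w = φ''' w := by
    rw [show (2:ℕ) = 1 + 1 from rfl, iteratedDeriv_succ, iteratedDeriv_one]
    have h : deriv φ' =ᶠ[𝓝 w] φ'' := by
      filter_upwards [hUn] with y hy using (hφ' y hy).deriv
    rw [h.deriv_eq]
    exact (hφ'' w hw).deriv
  -- Taylor expansions
  have hT1 : (fun z => φ z - (φ w + a * (z - w) + b * (z - w) ^ 2 + c * (z - w) ^ 3))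
      =O[𝓝 w] fun z => (z - w) ^ 4 := by
    have := analytic_taylor' φ w hAφ 4
    refine this.congr_left fun z => ?_
    simp only [Finset.sum_range_succ, Finset.sum_range_zero, iteratedDeriv_zero,
      iteratedDeriv_one, (hφ w hw).deriv, hd2 w hw, hd3]
    rw [hb_def, hc_def]
    norm_num [Nat.factorial]
    exact Or.inl rfl
  have hT2 : (fun z => φ' z - (a + 2 * b * (z - w) + 3 * c * (z - w) ^ 2))
      =O[𝓝 w] fun z => (z - w) ^ 3 := by
    have := analytic_taylor' φ' w hAφ' 3
    refine this.congr_left fun z => ?_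
    simp only [Finset.sum_range_succ, Finset.sum_range_zero, iteratedDeriv_zero,
      iteratedDeriv_one, (hφ' w hw).deriv, hd2']
    rw [ha_def, hb_def, hc_def]
    norm_num [Nat.factorial]
    all_goals ring
  -- the numerator N and its fourth-order behaviour
  set L : ℂ := a * c - b ^ 2 with hL_def
  set N : ℂ → ℂ := fun z => a * φ' z * (z - w) ^ 2 - (φ z - φ w) ^ 2 with hN_def
  have hsub : Tendsto (fun z : ℂ => z - w) (𝓝 w) (𝓝 (0 : ℂ)) := by
    simpa using (continuous_sub_right w).tendsto w
  have hpow : ∀ m k : ℕ, k < m →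
      (fun z : ℂ => (z - w) ^ m) =o[𝓝 w] fun z => (z - w) ^ k := fun m k hk =>
    (isLittleO_pow_pow hk).comp_tendsto hsub
  -- term A : -2bc u^5 - c^2 u^6 = o(u^4)
  have hA : (fun z : ℂ => -2 * b * c * (z - w) ^ 5 - c ^ 2 * (z - w) ^ 6)
      =o[𝓝 w] fun z => (z - w) ^ 4 :=
    ((hpow 5 4 (by norm_num)).const_mul_left (-2 * b * c)).sub
      ((hpow 6 4 (by norm_num)).const_mul_left (c ^ 2))
  -- term B : a * E₂ * u^2 = O(u^5) = o(u^4)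
  have hB : (fun z : ℂ => a * (φ' z - (a + 2 * b * (z - w) + 3 * c * (z - w) ^ 2))
        * (z - w) ^ 2) =o[𝓝 w] fun z => (z - w) ^ 4 := by
    have h1 : (fun z : ℂ => (a * (φ' z - (a + 2 * b * (z - w) + 3 * c * (z - w) ^ 2)))
        * (z - w) ^ 2) =O[𝓝 w] fun z => (z - w) ^ 3 * (z - w) ^ 2 :=
      (hT2.const_mul_left a).mul (isBigO_refl _ _)
    have h2 : (fun z : ℂ => (z - w) ^ 3 * (z - w) ^ 2) =o[𝓝 w] fun z => (z - w) ^ 4 :=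
      (hpow 5 4 (by norm_num)).congr (fun z => by ring) fun z => rfl
    exact (h1.trans_isLittleO h2).congr (fun z => by ring) fun z => rfl
  -- term C : (2P + E₁) * E₁ = o(1) * O(u^4)
  have hC : (fun z : ℂ =>
        (2 * (a * (z - w) + b * (z - w) ^ 2 + c * (z - w) ^ 3)
          + (φ z - (φ w + a * (z - w) + b * (z - w) ^ 2 + c * (z - w) ^ 3)))
        * (φ z - (φ w + a * (z - w) + b * (z - w) ^ 2 + c * (z - w) ^ 3)))
      =o[𝓝 w] fun z => (z - w) ^ 4 := by
    have hcont : Tendsto (fun z : ℂ =>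
        2 * (a * (z - w) + b * (z - w) ^ 2 + c * (z - w) ^ 3)
          + (φ z - (φ w + a * (z - w) + b * (z - w) ^ 2 + c * (z - w) ^ 3)))
        (𝓝 w) (𝓝 (0 : ℂ)) := by
      have hc : ContinuousAt (fun z : ℂ =>
          2 * (a * (z - w) + b * (z - w) ^ 2 + c * (z - w) ^ 3)
            + (φ z - (φ w + a * (z - w) + b * (z - w) ^ 2 + c * (z - w) ^ 3))) w := by
        have := (hφ w hw).differentiableAt.continuousAt
        fun_prop
      have := hc.tendsto
      simpa using this
    have h1 : (fun z : ℂ =>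
        2 * (a * (z - w) + b * (z - w) ^ 2 + c * (z - w) ^ 3)
          + (φ z - (φ w + a * (z - w) + b * (z - w) ^ 2 + c * (z - w) ^ 3)))
        =o[𝓝 w] (fun _ => (1 : ℂ)) := (isLittleO_one_iff ℂ).2 hcont
    have h2 := h1.mul_isBigO hT1
    exact h2.congr (fun z => rfl) fun z => one_mul _
  -- the key algebraic identity
  have key : ∀ z : ℂ, N z - L * (z - w) ^ 4
      = (-2 * b * c * (z - w) ^ 5 - c ^ 2 * (z - w) ^ 6)
        + (a * (φ' z - (a + 2 * b * (z - w) + 3 * c * (z - w) ^ 2)) * (z - w) ^ 2)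
        - ((2 * (a * (z - w) + b * (z - w) ^ 2 + c * (z - w) ^ 3)
            + (φ z - (φ w + a * (z - w) + b * (z - w) ^ 2 + c * (z - w) ^ 3)))
          * (φ z - (φ w + a * (z - w) + b * (z - w) ^ 2 + c * (z - w) ^ 3))) := by
    intro z
    rw [hN_def, hL_def]
    ring
  have hlittle : (fun z => N z - L * (z - w) ^ 4) =o[𝓝 w] fun z => (z - w) ^ 4 :=
    ((hA.add hB).sub hC).congr (fun z => (key z).symm) fun z => rfl
  -- hence N / u^4 → L along the punctured filter
  have hNd : Tendsto (fun z => N z / (z - w) ^ 4) (𝓝[≠] w) (𝓝 L) := by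
    have h0 := (hlittle.mono (nhdsWithin_le_nhds : 𝓝[≠] w ≤ 𝓝 w)).tendsto_div_nhds_zero
    have heq : ∀ᶠ z in 𝓝[≠] w,
        (N z - L * (z - w) ^ 4) / (z - w) ^ 4 + L = N z / (z - w) ^ 4 := by
      filter_upwards [self_mem_nhdsWithin] with z hz
      have hz' : (z : ℂ) - w ≠ 0 := sub_ne_zero.2 hz
      field_simp
      ring
    have := h0.add (tendsto_const_nhds (x := L))
    rw [zero_add] at this
    exact Tendsto.congr' heq this
  -- slope of φ at w
  have hslope : Tendsto (fun z => (φ z - φ w) / (z - w)) (𝓝[≠] w) (𝓝 a) := by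
    have := (hasDerivAt_iff_tendsto_slope).1 (hφ w hw)
    refine this.congr fun z => ?_
    simp [slope_def_field]
  have hψne : ∀ᶠ z in 𝓝[≠] w, φ z - φ w ≠ 0 := by
    filter_upwards [hslope.eventually_ne ha, self_mem_nhdsWithin] with z h1 h2
    intro h
    apply h1
    rw [h, zero_div]
  -- first limit: H → L / a^2
  have hH1 : Tendsto (fun z => a * φ' z * ((φ z - φ w) ^ 2)⁻¹ - ((z - w) ^ 2)⁻¹)
      (𝓝[≠] w) (𝓝 (L * (a ^ 2)⁻¹)) := by
    have h1 : Tendsto (fun z => N z / (z - w) ^ 4 * ((((φ z - φ w) / (z - w)) ^ 2)⁻¹))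
        (𝓝[≠] w) (𝓝 (L * (a ^ 2)⁻¹)) :=
      hNd.mul (((hslope.pow 2).inv₀ (pow_ne_zero 2 ha)))
    refine h1.congr' ?_
    filter_upwards [hψne, self_mem_nhdsWithin] with z h1 h2
    have hz : (z : ℂ) - w ≠ 0 := sub_ne_zero.2 h2
    rw [hN_def]
    field_simp
  -- second limit: H → -2c₂ + 2 ct₂ a^2, from the transformation law
  have hφ'cont : Tendsto φ' (𝓝[≠] w) (𝓝 a) :=
    ((hφ' w hw).differentiableAt.continuousAt.tendsto).mono_left nhdsWithin_le_nhds
  have hD : Tendsto (fun z => F z - ((z - w) ^ 2)⁻¹ + 2 * c₂) (𝓝[≠] w) (𝓝 0) := by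
    refine hexp.trans_tendsto ?_
    exact hsub.mono_left nhdsWithin_le_nhds
  have hφmap : Tendsto φ (𝓝[≠] w) (𝓝[≠] (φ w)) := by
    rw [tendsto_nhdsWithin_iff]
    constructor
    · exact ((hφ w hw).differentiableAt.continuousAt.tendsto).mono_left nhdsWithin_le_nhds
    · filter_upwards [hψne] with z hz
      simpa [sub_ne_zero] using hz
  have hDt : Tendsto (fun z => Ft (φ z) - ((φ z - φ w) ^ 2)⁻¹ + 2 * ct₂) (𝓝[≠] w) (𝓝 0) := by
    have h0 : Tendsto (fun ζ => Ft ζ - ((ζ - φ w) ^ 2)⁻¹ + 2 * ct₂) (𝓝[≠] (φ w)) (𝓝 0) := by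
      refine hexp'.trans_tendsto ?_
      simpa using ((continuous_sub_right (φ w)).tendsto (φ w)).mono_left nhdsWithin_le_nhds
    exact h0.comp hφmap
  have hH2 : Tendsto (fun z => a * φ' z * ((φ z - φ w) ^ 2)⁻¹ - ((z - w) ^ 2)⁻¹)
      (𝓝[≠] w) (𝓝 (-(2 * c₂) + 2 * ct₂ * a ^ 2)) := by
    have h1 : Tendsto (fun z => -(2 * c₂) + 2 * ct₂ * φ' z * a
          + (F z - ((z - w) ^ 2)⁻¹ + 2 * c₂)
          - (Ft (φ z) - ((φ z - φ w) ^ 2)⁻¹ + 2 * ct₂) * φ' z * a)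
        (𝓝[≠] w) (𝓝 (-(2 * c₂) + 2 * ct₂ * a * a + 0 - 0 * a * a)) := by
      exact ((((tendsto_const_nhds).add
        (((tendsto_const_nhds.mul hφ'cont).mul tendsto_const_nhds))).add hD).sub
        ((hDt.mul hφ'cont).mul tendsto_const_nhds))
    have h2 : (-(2 * c₂) + 2 * ct₂ * a * a + 0 - 0 * a * a)
        = -(2 * c₂) + 2 * ct₂ * a ^ 2 := by ring
    rw [h2] at h1
    refine h1.congr' ?_
    filter_upwards [mem_nhdsWithin_of_mem_nhds hUn, self_mem_nhdsWithin] with z hz hz2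
    linear_combination -htrans z hz hz2
  -- uniqueness of limits
  have huniq : L * (a ^ 2)⁻¹ = -(2 * c₂) + 2 * ct₂ * a ^ 2 :=
    tendsto_nhds_unique hH1 hH2
  rw [hL_def, hb_def, hc_def] at huniq
  field_simp [ha] at huniq ⊢
  linear_combination (-1/2 : ℂ) * huniq
end
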